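/- Let ι be a finite type, S a nonempty subset of ℤ≥0^ι, and N(S) the associated Newton polyhedron. Every nonempty compact exposed face F of N(S) is of the form F = F_ρ = {x ∈ N(S) : ρ(x) = min{ρ(σ) : σ ∈ S}} for some vector of weights ρ on ℝ^ι. Hence the nonempty compact exposed faces of N(S) are precisely the sets F_ρ with ρ a vector of weights. -/
import Mathlib

open Pointwise

/-- A vector of weights on `ℝ^ι`: a linear map `ρ : (ι → ℝ) → ℝ` with `ρ(σ) > 0`
for every nonzero `σ` with all coordinates nonnegative. -/
def IsWeightVector {ι : Type*} (ρ : (ι → ℝ) →ₗ[ℝ] ℝ) : Prop :=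
  ∀ σ : ι → ℝ, (∀ i, 0 ≤ σ i) → σ ≠ 0 → 0 < ρ σ

/-- The Newton polyhedron of a set `S ⊆ ℤ≥0^ι`: the Minkowski sum of the convex
hull of `S` (viewed inside `ℝ^ι`) with the nonnegative orthant. -/
def newtonPolyhedron {ι : Type*} (S : Set (ι → ℕ)) : Set (ι → ℝ) :=
  convexHull ℝ ((fun σ : ι → ℕ => fun i => (σ i : ℝ)) '' S) + {x : ι → ℝ | ∀ i, 0 ≤ x i}

namespace NewtonAux

variable {ι : Type*}

/-- Coordinate "basis vector". -/
def delta (i : ι) [DecidableEq ι] : ι → ℝ := fun j => if i = j then 1 else 0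

lemma weight_nonneg {ρ : (ι → ℝ) →ₗ[ℝ] ℝ} (hρ : IsWeightVector ρ)
    {u : ι → ℝ} (hu : ∀ i, 0 ≤ u i) : 0 ≤ ρ u := by
  rcases eq_or_ne u 0 with h | h
  · simp [h]
  · exact (hρ u hu h).le

lemma mem_newton_add {S : Set (ι → ℕ)} {x u : ι → ℝ}
    (hx : x ∈ newtonPolyhedron S) (hu : ∀ i, 0 ≤ u i) : x + u ∈ newtonPolyhedron S := by
  obtain ⟨c, hc, v, hv, rfl⟩ := Set.mem_add.mp hx
  exact Set.mem_add.mpr ⟨c, hc, v + u, fun i => add_nonneg (hv i) (hu i), (add_assoc _ _ _).symm⟩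

lemma emb_mem_newton {S : Set (ι → ℕ)} {σ : ι → ℕ} (hσ : σ ∈ S) :
    (fun i => (σ i : ℝ)) ∈ newtonPolyhedron S :=
  Set.mem_add.mpr ⟨_, subset_convexHull ℝ _ ⟨σ, hσ, rfl⟩, 0, fun _ => le_refl 0, add_zero _⟩

lemma weight_lb [Fintype ι] {ρ : (ι → ℝ) →ₗ[ℝ] ℝ} (hρ : IsWeightVector ρ)
    {S : Set (ι → ℕ)} {ν : ℝ} (hν : ∀ σ ∈ S, ν ≤ ρ (fun i => (σ i : ℝ)))
    {x : ι → ℝ} (hx : x ∈ newtonPolyhedron S) : ν ≤ ρ x := by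
  obtain ⟨c, hc, u, hu, rfl⟩ := Set.mem_add.mp hx
  have h1 : ν ≤ ρ c := by
    have : c ∈ {y : ι → ℝ | ν ≤ ρ y} := convexHull_min
      (by rintro _ ⟨σ, hσ, rfl⟩; exact hν σ hσ) (convex_halfSpace_ge ρ.isLinear ν) hc
    exact this
  have h2 : 0 ≤ ρ u := weight_nonneg hρ hu
  rw [map_add]
  linarith

lemma isWeightVector_of_delta [Fintype ι] [DecidableEq ι] {ρ : (ι → ℝ) →ₗ[ℝ] ℝ}
    (h : ∀ i, 0 < ρ (delta i)) : IsWeightVector ρ := by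
  intro σ hσ hσ0
  rw [LinearMap.pi_apply_eq_sum_univ ρ σ]
  obtain ⟨j, hj⟩ := Function.ne_iff.mp hσ0
  refine Finset.sum_pos' (fun i _ => smul_nonneg (hσ i) (h i).le)
    ⟨j, Finset.mem_univ j, smul_pos (lt_of_le_of_ne (hσ j) (Ne.symm hj)) (h j)⟩

lemma delta_nonneg [DecidableEq ι] (i j : ι) : 0 ≤ delta i j := by
  unfold delta; split <;> norm_num

lemma delta_pos_coords [Fintype ι] [DecidableEq ι] {ρ : (ι → ℝ) →ₗ[ℝ] ℝ}
    (hρ : IsWeightVector ρ) (i : ι) : 0 < ρ (delta i) := by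
  refine hρ _ (delta_nonneg i) ?_
  intro h
  have := congrFun h i
  simp [delta] at this

lemma finite_sub_level [Fintype ι] {ρ : (ι → ℝ) →ₗ[ℝ] ℝ} (hρ : IsWeightVector ρ) (B : ℝ) :
    {σ : ι → ℕ | ρ (fun i => (σ i : ℝ)) ≤ B}.Finite := by
  classical
  apply Set.Finite.subset (Set.Finite.pi (fun i => Set.finite_Iic (⌊B / ρ (delta i)⌋₊)))
  intro σ hσ
  simp only [Set.mem_pi, Set.mem_univ, Set.mem_Iic, forall_true_left]
  intro i
  have hc := delta_pos_coords hρ i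
  have hsum : ρ (fun j => (σ j : ℝ)) = ∑ k, (σ k : ℝ) • ρ (delta k) :=
    LinearMap.pi_apply_eq_sum_univ ρ _
  have hterm : (σ i : ℝ) * ρ (delta i) ≤ B := by
    calc (σ i : ℝ) * ρ (delta i) ≤ ∑ k, (σ k : ℝ) • ρ (delta k) :=
          Finset.single_le_sum (f := fun k => (σ k : ℝ) • ρ (delta k))
            (fun k _ => smul_nonneg (Nat.cast_nonneg _) (delta_pos_coords hρ k).le)
            (Finset.mem_univ i)
      _ = ρ (fun j => (σ j : ℝ)) := hsum.symm
      _ ≤ B := hσ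
  exact Nat.le_floor ((le_div_iff₀ hc).mpr hterm)

lemma exists_isLeast [Fintype ι] {ρ : (ι → ℝ) →ₗ[ℝ] ℝ} (hρ : IsWeightVector ρ)
    {S : Set (ι → ℕ)} (hS : S.Nonempty) :
    ∃ ν, IsLeast ((fun σ : ι → ℕ => ρ (fun i => (σ i : ℝ))) '' S) ν := by
  obtain ⟨σ0, hσ0⟩ := hS
  set B := ρ (fun i => (σ0 i : ℝ)) with hB
  have hfin : ({σ ∈ S | ρ (fun i => (σ i : ℝ)) ≤ B}).Finite :=
    (finite_sub_level hρ B).subset (fun σ h => h.2)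
  obtain ⟨σm, hσm, hmin⟩ := Set.exists_min_image _
    (fun σ : ι → ℕ => ρ (fun i => (σ i : ℝ))) hfin ⟨σ0, hσ0, le_refl B⟩
  refine ⟨ρ (fun i => (σm i : ℝ)), ⟨σm, hσm.1, rfl⟩, ?_⟩
  rintro _ ⟨σ, hσ, rfl⟩
  by_cases h : ρ (fun i => (σ i : ℝ)) ≤ B
  · exact hmin σ ⟨hσ, h⟩
  · exact le_trans (hmin σ0 ⟨hσ0, le_refl B⟩) (not_le.mp h).le

lemma face_eq_convexHull [Fintype ι] {ρ : (ι → ℝ) →ₗ[ℝ] ℝ} (hρ : IsWeightVector ρ)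
    {S : Set (ι → ℕ)} {ν : ℝ}
    (hν : IsLeast ((fun σ : ι → ℕ => ρ (fun i => (σ i : ℝ))) '' S) ν) :
    {x ∈ newtonPolyhedron S | ρ x = ν} =
      convexHull ℝ ((fun σ : ι → ℕ => fun i => (σ i : ℝ)) ''
        {σ ∈ S | ρ (fun i => (σ i : ℝ)) = ν}) := by
  classical
  have hνS : ∀ σ ∈ S, ν ≤ ρ (fun i => (σ i : ℝ)) := fun σ hσ => hν.2 ⟨σ, hσ, rfl⟩
  apply Set.Subset.antisymm
  · rintro x ⟨hxN, hxρ⟩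
    obtain ⟨c, hc, u, hu, rfl⟩ := Set.mem_add.mp hxN
    have h1 : ν ≤ ρ c := by
      have : c ∈ {y : ι → ℝ | ν ≤ ρ y} := convexHull_min
        (by rintro _ ⟨σ, hσ, rfl⟩; exact hνS σ hσ) (convex_halfSpace_ge ρ.isLinear ν) hc
      exact this
    have hsum : ρ c + ρ u = ν := by rw [← map_add]; exact hxρ
    have hu0 : u = 0 := by
      by_contra h
      have := hρ u hu h
      linarith
    have hcν : ρ c = ν := by rw [hu0, map_zero] at hsum; linarith
    have hxc : c + u = c := by rw [hu0, add_zero]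
    rw [hxc]
    rw [convexHull_eq] at hc
    obtain ⟨κ, t, w, z, hw0, hw1, hz, hx⟩ := hc
    have hz' : ∀ j ∈ t, ν ≤ ρ (z j) := by
      intro j hj
      obtain ⟨σ, hσ, hzeq⟩ := hz j hj
      have hzeq' : (fun i => (σ i : ℝ)) = z j := hzeq
      rw [← hzeq']
      exact hνS σ hσ
    have hρc : ρ c = ∑ j ∈ t, w j * ρ (z j) := by
      rw [← hx, Finset.centerMass_eq_of_sum_1 _ _ hw1, map_sum]
      simp [smul_eq_mul]
    have hzero : ∀ j ∈ t, w j * (ρ (z j) - ν) = 0 := by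
      have hsum0 : ∑ j ∈ t, w j * (ρ (z j) - ν) = 0 := by
        have : ∑ j ∈ t, w j * (ρ (z j) - ν)
            = (∑ j ∈ t, w j * ρ (z j)) - (∑ j ∈ t, w j) * ν := by
          rw [Finset.sum_mul, ← Finset.sum_sub_distrib]
          exact Finset.sum_congr rfl (fun j _ => by ring)
        rw [this, ← hρc, hcν, hw1, one_mul, sub_self]
      intro j hj
      exact (Finset.sum_eq_zero_iff_of_nonneg
        (fun j hj => mul_nonneg (hw0 j hj) (sub_nonneg.mpr (hz' j hj)))).mp hsum0 j hj
    rw [← Finset.centerMass_filter_ne_zero (w := w)] at hx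
    rw [← hx]
    apply Finset.centerMass_mem_convexHull
    · exact fun j hj => hw0 j (Finset.mem_filter.mp hj).1
    · rw [Finset.sum_filter_ne_zero, hw1]; norm_num
    · intro j hj
      obtain ⟨hjt, hjw⟩ := Finset.mem_filter.mp hj
      obtain ⟨σ, hσ, hzeq⟩ := hz j hjt
      have hzeq' : (fun i => (σ i : ℝ)) = z j := hzeq
      refine ⟨σ, ⟨hσ, ?_⟩, hzeq⟩
      have h0 := hzero j hjt
      have : ρ (z j) - ν = 0 := by
        rcases mul_eq_zero.mp h0 with h | h
        · exact absurd h hjw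
        · exact h
      rw [hzeq']
      linarith
  · apply convexHull_min
    · rintro _ ⟨σ, ⟨hσ, hσν⟩, rfl⟩
      exact ⟨emb_mem_newton hσ, hσν⟩
    · have horth : Convex ℝ {x : ι → ℝ | ∀ i, 0 ≤ x i} := by
        intro x hx y hy a b ha hb hab i
        have := add_nonneg (mul_nonneg ha (hx i)) (mul_nonneg hb (hy i))
        simpa using this
      exact Convex.inter ((convex_convexHull ℝ _).add horth) (convex_hyperplane ρ.isLinear ν)

end NewtonAux

open NewtonAux in
/-- The nonempty compact exposed faces of the Newton polyhedron
`N(S)` are precisely the sets `F_ρ = {x ∈ N(S) : ρ(x) = min ρ(S)}`, for `ρ` a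
vector of weights on `ℝ^ι`. -/
theorem compact_exposed_faces_are_weight_faces {ι : Type*} [Fintype ι]
    (S : Set (ι → ℕ)) (hS : S.Nonempty) (F : Set (ι → ℝ)) :
    (F.Nonempty ∧ IsCompact F ∧ IsExposed ℝ (newtonPolyhedron S) F) ↔
      ∃ ρ : (ι → ℝ) →ₗ[ℝ] ℝ, IsWeightVector ρ ∧
        ∃ ν : ℝ, IsLeast ((fun σ : ι → ℕ => ρ (fun i => (σ i : ℝ))) '' S) ν ∧
          F = {x ∈ newtonPolyhedron S | ρ x = ν} := by
  classical
  constructor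
  · rintro ⟨hne, hcomp, hexp⟩
    obtain ⟨l, hF⟩ := hexp hne
    set ρ : (ι → ℝ) →ₗ[ℝ] ℝ := -(l : (ι → ℝ) →ₗ[ℝ] ℝ) with hρdef
    have hρ_apply : ∀ y, ρ y = -(l y) := fun y => rfl
    obtain ⟨x0, hx0F⟩ := hne
    have hx0' := hx0F
    rw [hF] at hx0'
    obtain ⟨hx0N, hmax⟩ := hx0'
    have hδpos : ∀ i, 0 < ρ (delta i) := by
      intro i
      have hδnn : ∀ j, (0:ℝ) ≤ delta i j := delta_nonneg i
      have hnonneg : 0 ≤ ρ (delta i) := by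
        have h1 : l (x0 + delta i) ≤ l x0 := hmax _ (mem_newton_add hx0N hδnn)
        rw [map_add] at h1
        rw [hρ_apply]
        linarith
      rcases hnonneg.lt_or_eq with h | h
      · exact h
      · exfalso
        have hl0 : l (delta i) = 0 := by
          have := hρ_apply (delta i)
          rw [← h] at this
          linarith
        obtain ⟨C, hC⟩ := isBounded_iff_forall_norm_le.mp hcomp.isBounded
        have hC0 : 0 ≤ C := le_trans (norm_nonneg x0) (hC x0 hx0F)
        set t : ℝ := 2 * C + 1 with ht
        have htnn : 0 ≤ t := by linarith
        have hmem : x0 + t • delta i ∈ F := by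
          rw [hF]
          refine ⟨mem_newton_add hx0N (fun j => smul_nonneg htnn (hδnn j)), fun y hy => ?_⟩
          have : l (x0 + t • delta i) = l x0 := by
            rw [map_add, map_smul, hl0, smul_zero, add_zero]
          rw [this]
          exact hmax y hy
        have h1 : |(x0 + t • delta i) i| ≤ C := by
          calc |(x0 + t • delta i) i| = ‖(x0 + t • delta i) i‖ := rfl
            _ ≤ ‖x0 + t • delta i‖ := norm_le_pi_norm _ i
            _ ≤ C := hC _ hmem
        have h2 : |x0 i| ≤ C := by
          calc |x0 i| = ‖x0 i‖ := rfl
            _ ≤ ‖x0‖ := norm_le_pi_norm _ i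
            _ ≤ C := hC _ hx0F
        have hcoord : (x0 + t • delta i) i = x0 i + t := by
          simp [delta, smul_eq_mul]
        rw [hcoord] at h1
        have ha := abs_le.mp h1
        have hb := abs_le.mp h2
        linarith [ha.2, hb.1]
    have hρw : IsWeightVector ρ := isWeightVector_of_delta hδpos
    obtain ⟨ν, hν⟩ := exists_isLeast hρw hS
    refine ⟨ρ, hρw, ν, hν, ?_⟩
    obtain ⟨σm, hσm, hσmν⟩ := hν.1
    have hσmN : (fun i => (σm i : ℝ)) ∈ newtonPolyhedron S := emb_mem_newton hσm
    have hlb : ∀ σ ∈ S, ν ≤ ρ (fun i => (σ i : ℝ)) := fun σ hσ => hν.2 ⟨σ, hσ, rfl⟩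
    rw [hF]
    ext x
    constructor
    · rintro ⟨hxN, hxmax⟩
      refine ⟨hxN, le_antisymm ?_ (weight_lb hρw hlb hxN)⟩
      have h3 := hxmax _ hσmN
      rw [hρ_apply]
      have : ρ (fun i => (σm i : ℝ)) = ν := hσmν
      rw [hρ_apply] at this
      linarith
    · rintro ⟨hxN, hxρ⟩
      refine ⟨hxN, fun y hy => ?_⟩
      have h4 : ν ≤ ρ y := weight_lb hρw hlb hy
      rw [hρ_apply] at h4 hxρ
      linarith
  · rintro ⟨ρ, hρw, ν, hν, rfl⟩
    obtain ⟨σm, hσm, hσmν⟩ := hν.1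
    have hlb : ∀ σ ∈ S, ν ≤ ρ (fun i => (σ i : ℝ)) := fun σ hσ => hν.2 ⟨σ, hσ, rfl⟩
    have hσmN : (fun i => (σm i : ℝ)) ∈ newtonPolyhedron S := emb_mem_newton hσm
    refine ⟨⟨_, hσmN, hσmν⟩, ?_, ?_⟩
    · rw [face_eq_convexHull hρw hν]
      apply Set.Finite.isCompact_convexHull
      apply Set.Finite.image
      exact (finite_sub_level hρw ν).subset (fun σ hσ => hσ.2.le)
    · intro _
      refine ⟨-(LinearMap.toContinuousLinearMap ρ), ?_⟩
      have hap : ∀ y, (-(LinearMap.toContinuousLinearMap ρ)) y = -(ρ y) := fun y => rfl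
      ext x
      constructor
      · rintro ⟨hxN, hxρ⟩
        refine ⟨hxN, fun y hy => ?_⟩
        have := weight_lb hρw hlb hy
        rw [hap, hap]
        linarith
      · rintro ⟨hxN, hmax⟩
        refine ⟨hxN, le_antisymm ?_ (weight_lb hρw hlb hxN)⟩
        have h3 := hmax _ hσmN
        rw [hap, hap] at h3
        linarith
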